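/- Let n ≥ 1, let λ be a partition with l(λ) = n, and let μ ⊆ λ be a partition with l(μ) = n−1. Then the following identity holds in the field ℚ(t) of rational functions: (b_μ(t²)/b_λ(t²)) · Σ_β φ_{λ/β}(t²) · t^{2(|β|−|μ|)} · sk_{β/μ}(t²) = t^{2·Σ_{j≥1} C(λ'_j − μ'_j, 2)} · ∏_{j≥1} binom(λ'_j − μ'_{j+1}, λ'_j − λ'_{j+1})_{t²}, where the sum is over all partitions β with μ ⊆ β, β ≼ λ (i.e. λ/β is a horizontal strip), and l(β) ≤ n−1. (The left-hand side is the q → 0 limit of the Gelfand–Tsetlin branching coefficient c_{λ,μ}(q,t) of the Etingof–Kirillov trace function, and the right-hand side is its closed product form.) -/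

import Mathlib

open scoped BigOperators Classical

namespace EK

/-- Conjugate partition: `conj f j = #{i : f i ≥ j}` (parts of `f` are `f 0, f 1, …`,
i.e. `f i = λ_{i+1}`). -/
noncomputable def conj (f : ℕ → ℕ) (j : ℕ) : ℕ := Nat.card {i : ℕ // j ≤ f i}

/-- `f` represents a partition: weakly decreasing with finitely many nonzero parts. -/
def IsPartition (f : ℕ → ℕ) : Prop := Antitone f ∧ ∃ N, ∀ i, N ≤ i → f i = 0

/-- `l(f) = n`: the first `n` parts are positive, the rest vanish. -/
def HasLength (f : ℕ → ℕ) (n : ℕ) : Prop := (∀ i < n, 0 < f i) ∧ ∀ i, n ≤ i → f i = 0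

/-- `|λ| = Σ_i λ_i`. -/
noncomputable def psize (f : ℕ → ℕ) : ℕ := ∑ᶠ i, f i

/-- `n(λ) = Σ_{i ≥ 1} (i-1) λ_i` (0-indexed: `Σ_i i * f i`). -/
noncomputable def nstat (f : ℕ → ℕ) : ℕ := ∑ᶠ i, i * f i

/-- `φ_r(u) = ∏_{i=1}^r (1 - u^i)`. -/
def phiPoch {F : Type*} [Field F] (u : F) (r : ℕ) : F := ∏ i ∈ Finset.Icc 1 r, (1 - u ^ i)

/-- Gaussian binomial `binom(a,b)_u = φ_a(u)/(φ_b(u) φ_{a-b}(u))` for `0 ≤ b ≤ a`, `0` otherwise. -/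
noncomputable def gauss {F : Type*} [Field F] (u : F) (a b : ℤ) : F :=
  if 0 ≤ b ∧ b ≤ a then phiPoch u a.toNat / (phiPoch u b.toNat * phiPoch u (a - b).toNat)
  else 0

/-- `sk_{λ/μ}(u) = u^{Σ_{j≥1} C(λ'_j - μ'_j, 2)} ∏_{j≥1} binom(λ'_j - μ'_{j+1}, m_j(μ))_u`
(the factors for `j > λ_1` are all `1` and the exponents vanish there, so the product and
sum are taken over `1 ≤ j ≤ λ_1 = f 0`). -/
noncomputable def sk {F : Type*} [Field F] (u : F) (f g : ℕ → ℕ) : F :=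
  u ^ (∑ j ∈ Finset.Icc 1 (f 0), Nat.choose (conj f j - conj g j) 2) *
    ∏ j ∈ Finset.Icc 1 (f 0),
      gauss u ((conj f j : ℤ) - (conj g (j + 1) : ℤ)) ((conj g j : ℤ) - (conj g (j + 1) : ℤ))

/-- `μ ⊆ λ` and `λ/μ` is a horizontal strip, i.e. `λ'_j - μ'_j ∈ {0,1}` for all `j ≥ 1`. -/
def IsHStrip (f g : ℕ → ℕ) : Prop :=
  (∀ i, g i ≤ f i) ∧ ∀ j, 1 ≤ j → conj f j ≤ conj g j + 1

/-- `φ_{λ/μ}(u) = ∏_{j ≥ 1, λ'_j = μ'_j + 1, λ'_{j+1} = μ'_{j+1}} (1 - u^{m_j(λ)})` if `λ/μ` is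
a horizontal strip, and `0` otherwise (factors with `j > λ_1` never occur). -/
noncomputable def phiStrip {F : Type*} [Field F] (u : F) (f g : ℕ → ℕ) : F :=
  if IsHStrip f g then
    ∏ j ∈ (Finset.Icc 1 (f 0)).filter
        (fun j => conj f j = conj g j + 1 ∧ conj f (j + 1) = conj g (j + 1)),
      (1 - u ^ (conj f j - conj f (j + 1)))
  else 0

/-- `b_λ(u) = ∏_{i ≥ 1} φ_{m_i(λ)}(u)` (factors with `i > λ_1` are `1`). -/
noncomputable def bcoef {F : Type*} [Field F] (u : F) (f : ℕ → ℕ) : F :=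
  ∏ i ∈ Finset.Icc 1 (f 0), phiPoch u (conj f i - conj f (i + 1))



section Aux

/-! ### basic nat facts -/

lemma nat_ext {x y : ℕ} (h : ∀ k, k < x ↔ k < y) : x = y := by
  by_contra hne
  rcases Nat.lt_or_ge x y with h' | h'
  · exact absurd ((h x).mpr h') (lt_irrefl x)
  · rcases Nat.lt_or_ge y x with h'' | h''
    · exact absurd ((h y).mp h'') (lt_irrefl y)
    · exact hne (le_antisymm h'' h')

lemma card_lt (k : ℕ) : Nat.card {i : ℕ // i < k} = k := by
  calc Nat.card {i : ℕ // i < k} = Nat.card {i : ℕ | i < k} := rfl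
    _ = ({i : ℕ | i < k}).ncard := (Nat.card_coe_set_eq _)
    _ = k := by
        rw [show {i : ℕ | i < k} = ↑(Finset.Iio k) by ext i; simp, Set.ncard_coe_finset,
          Nat.card_Iio]

/-! ### conj -/

/-- Key characterization of the conjugate partition. -/
lemma conj_iff {f : ℕ → ℕ} (hf : Antitone f) (hN : ∃ N, ∀ i, N ≤ i → f i = 0)
    {j : ℕ} (hj : 1 ≤ j) (i : ℕ) : j ≤ f i ↔ i < conj f j := by
  obtain ⟨N, hN⟩ := hN
  have hex : ∃ m, f m < j := ⟨N, by rw [hN N le_rfl]; omega⟩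
  set k := Nat.find hex with hk
  have hiff : ∀ i, j ≤ f i ↔ i < k := by
    intro i
    constructor
    · intro h
      by_contra h'
      have h2 : f i ≤ f k := hf (by omega)
      have h3 : f k < j := Nat.find_spec hex
      omega
    · intro h
      have h2 : ¬ f i < j := Nat.find_min hex h
      omega
  have hcard : conj f j = k := by
    have : ∀ i : ℕ, (j ≤ f i) = (i < k) := fun i => propext (hiff i)
    unfold conj
    rw [show {i : ℕ // j ≤ f i} = {i : ℕ // i < k} by congr 1; ext i; exact hiff i]
    exact card_lt k
  rw [hcard]; exact hiff i

lemma conj_mono {f g : ℕ → ℕ} (hf : Antitone f) (hfN : ∃ N, ∀ i, N ≤ i → f i = 0)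
    (hg : Antitone g) (hgN : ∃ N, ∀ i, N ≤ i → g i = 0)
    (hle : ∀ i, g i ≤ f i) {j : ℕ} (hj : 1 ≤ j) : conj g j ≤ conj f j := by
  by_contra h
  push_neg at h
  have h1 : j ≤ g (conj f j) := (conj_iff hg hgN hj _).mpr h
  have h2 : ¬ j ≤ f (conj f j) := by
    intro hcon; exact absurd ((conj_iff hf hfN hj _).mp hcon) (lt_irrefl _)
  exact h2 (le_trans h1 (hle _))

lemma conj_anti {f : ℕ → ℕ} (hf : Antitone f) (hfN : ∃ N, ∀ i, N ≤ i → f i = 0)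
    {j j' : ℕ} (hj : 1 ≤ j) (hjj' : j ≤ j') : conj f j' ≤ conj f j := by
  by_contra h
  push_neg at h
  have h1 : j' ≤ f (conj f j) := (conj_iff hf hfN (by omega) _).mpr h
  have h2 : ¬ j ≤ f (conj f j) := by
    intro hcon; exact absurd ((conj_iff hf hfN hj _).mp hcon) (lt_irrefl _)
  exact h2 (by omega)

lemma conj_eq_zero {f : ℕ → ℕ} (hf : Antitone f) (hfN : ∃ N, ∀ i, N ≤ i → f i = 0)
    {j : ℕ} (hj : f 0 < j) : conj f j = 0 := by
  by_contra h
  have h1 : j ≤ f 0 := (conj_iff hf hfN (by omega) 0).mpr (by omega)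
  omega

lemma conj_pos {f : ℕ → ℕ} (hf : Antitone f) (hfN : ∃ N, ∀ i, N ≤ i → f i = 0)
    {j : ℕ} (hj : 1 ≤ j) (hj2 : j ≤ f 0) : 1 ≤ conj f j := by
  have := (conj_iff hf hfN hj 0).mp hj2; omega

lemma conj_le_len {f : ℕ → ℕ} (hf : Antitone f) (hfN : ∃ N, ∀ i, N ≤ i → f i = 0)
    {n : ℕ} (hlen : ∀ i, n ≤ i → f i = 0) {j : ℕ} (hj : 1 ≤ j) : conj f j ≤ n := by
  by_contra h
  push_neg at h
  have h1 : j ≤ f n := (conj_iff hf hfN hj n).mpr h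
  rw [hlen n le_rfl] at h1
  omega

lemma conj_one_of_hasLength {f : ℕ → ℕ} (hf : Antitone f) (hfN : ∃ N, ∀ i, N ≤ i → f i = 0)
    {n : ℕ} (hlen : HasLength f n) : conj f 1 = n := by
  apply nat_ext
  intro k
  rw [← conj_iff hf hfN le_rfl k]
  constructor
  · intro h
    by_contra h'
    rw [hlen.2 k (by omega)] at h
    omega
  · intro h
    exact hlen.1 k h


/-- rows of a column-length function `c` (1-indexed: `c 1, c 2, …` are the column heights;
`c 0` is ignored). -/
noncomputable def rows (c : ℕ → ℕ) (i : ℕ) : ℕ := conj (fun j => c (j + 1)) (i + 1)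

section rowsec
variable {c : ℕ → ℕ} (hc : Antitone (fun j => c (j + 1)))
  (hcN : ∃ N, ∀ i, N ≤ i → c (i + 1) = 0)

include hc hcN

lemma rows_anti : Antitone (rows c) := by
  intro i i' h
  exact conj_anti hc hcN (by omega) (by omega)

lemma rows_ev_zero {i : ℕ} (h : c 1 ≤ i) : rows c i = 0 :=
  conj_eq_zero hc hcN (by show c (0 + 1) < i + 1; norm_num; omega)

lemma rows_exists_zero : ∃ N, ∀ i, N ≤ i → rows c i = 0 :=
  ⟨c 1, fun i hi => rows_ev_zero hc hcN hi⟩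

/-- the conjugate of `rows c` recovers `c`. -/
lemma conj_rows {j : ℕ} (hj : 1 ≤ j) : conj (rows c) j = c j := by
  apply nat_ext
  intro i
  constructor
  · intro h
    have h1 : j ≤ rows c i :=
      (conj_iff (rows_anti hc hcN) (rows_exists_zero hc hcN) hj i).mpr h
    have h2 : j - 1 < conj (fun j => c (j + 1)) (i + 1) := by unfold rows at h1; omega
    have h3 := (conj_iff hc hcN (by omega) (j - 1)).mpr h2
    have : j - 1 + 1 = j := by omega
    rw [this] at h3
    omega
  · intro h
    apply (conj_iff (rows_anti hc hcN) (rows_exists_zero hc hcN) hj i).mp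
    unfold rows
    have h3 : i + 1 ≤ c (j - 1 + 1) := by
      have : j - 1 + 1 = j := by omega
      rw [this]; omega
    have := (conj_iff hc hcN (i := j - 1) (by omega)).mp h3
    omega

end rowsec

section partsec
variable {f : ℕ → ℕ} (hf : Antitone f) (hfN : ∃ N, ∀ i, N ≤ i → f i = 0)
include hf hfN

lemma conj_succ_anti : Antitone (fun j => conj f (j + 1)) := by
  intro j j' h
  exact conj_anti hf hfN (by omega) (by omega)

lemma conj_succ_ev_zero : ∃ N, ∀ i, N ≤ i → conj f (i + 1) = 0 :=
  ⟨f 0, fun i hi => conj_eq_zero hf hfN (by omega)⟩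

/-- each row is recovered from the conjugate. -/
lemma rows_conj (i : ℕ) : rows (conj f) i = f i := by
  apply nat_ext
  intro k
  unfold rows
  rw [← conj_iff (conj_succ_anti hf hfN) (conj_succ_ev_zero hf hfN) (by omega) k]
  show i + 1 ≤ conj f (k + 1) ↔ k < f i
  have h1 := conj_iff hf hfN (j := k + 1) (by omega) i
  constructor
  · intro h
    have := h1.mpr (by omega)
    omega
  · intro h
    have := h1.mp (by omega)
    omega

/-- `|f| = Σ_{j=1}^M conj f j` for any `M ≥ f 0`. -/
lemma psize_eq_sum_conj {M : ℕ} (hM : f 0 ≤ M) :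
    psize f = ∑ j ∈ Finset.Icc 1 M, conj f j := by
  classical
  set N := conj f 1 with hN
  have hsupp : ∀ i, N ≤ i → f i = 0 := by
    intro i hi
    by_contra h
    have : 1 ≤ f i := by omega
    have := (conj_iff hf hfN le_rfl i).mp this
    omega
  have h1 : psize f = ∑ i ∈ Finset.Iio N, f i := by
    apply finsum_eq_finset_sum_of_support_subset
    intro i hi
    simp only [Function.mem_support] at hi
    simp only [Finset.coe_Iio, Set.mem_Iio]
    by_contra h
    exact hi (hsupp i (by omega))
  rw [h1]
  have h2 : ∀ i, i < N → f i = ((Finset.Icc 1 M).filter (fun j => j ≤ f i)).card := by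
    intro i _
    have hfi : f i ≤ M := le_trans (hf (Nat.zero_le i)) hM
    rw [show (Finset.Icc 1 M).filter (fun j => j ≤ f i) = Finset.Icc 1 (f i) by
      ext j; simp only [Finset.mem_filter, Finset.mem_Icc]; omega]
    simp [Nat.card_Icc]
  calc ∑ i ∈ Finset.Iio N, f i
      = ∑ i ∈ Finset.Iio N, ∑ j ∈ Finset.Icc 1 M, (if j ≤ f i then 1 else 0) := by
        apply Finset.sum_congr rfl
        intro i hi
        conv_lhs => rw [h2 i (Finset.mem_Iio.mp hi)]
        rw [Finset.card_filter]
    _ = ∑ j ∈ Finset.Icc 1 M, ∑ i ∈ Finset.Iio N, (if j ≤ f i then 1 else 0) :=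
        Finset.sum_comm
    _ = ∑ j ∈ Finset.Icc 1 M, conj f j := by
        apply Finset.sum_congr rfl
        intro j hj
        simp only [Finset.mem_Icc] at hj
        rw [← Finset.card_filter]
        rw [show (Finset.Iio N).filter (fun i => j ≤ f i) = Finset.Iio (conj f j) by
          ext i
          simp only [Finset.mem_filter, Finset.mem_Iio]
          rw [conj_iff hf hfN hj.1 i]
          have : conj f j ≤ N := conj_anti hf hfN le_rfl hj.1
          omega]
        simp
end partsec

variable {F : Type*} [Field F]

lemma phiPoch_zero (u : F) : phiPoch u 0 = 1 := by simp [phiPoch]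

lemma phiPoch_succ (u : F) (r : ℕ) : phiPoch u (r + 1) = phiPoch u r * (1 - u ^ (r + 1)) := by
  unfold phiPoch
  rw [Finset.prod_Icc_succ_top (by omega)]

lemma phiPoch_ne_zero {u : F} (hu : ∀ i, 1 ≤ i → u ^ i ≠ 1) (r : ℕ) : phiPoch u r ≠ 0 := by
  unfold phiPoch
  apply Finset.prod_ne_zero_iff.mpr
  intro i hi
  simp only [Finset.mem_Icc] at hi
  intro h
  exact hu i hi.1 (by linear_combination -h)

lemma gauss_nat (u : F) (A B : ℕ) (h : B ≤ A) :
    gauss u (A : ℤ) (B : ℤ) = phiPoch u A / (phiPoch u B * phiPoch u (A - B)) := by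
  unfold gauss
  rw [if_pos ⟨Int.ofNat_nonneg B, by exact_mod_cast h⟩]
  rw [show ((A : ℤ) - B) = ((A - B : ℕ) : ℤ) by push_cast [Nat.cast_sub h]; ring]
  simp

lemma gauss_zero_of_lt (u : F) (A B : ℤ) (h : A < B) : gauss u A B = 0 := by
  unfold gauss
  rw [if_neg]
  omega

/-- the two-term column weight. `e` is the indicator of this column, `e'` of the next. -/
noncomputable def colW (u : F) (a b : ℕ → ℕ) (j : ℕ) (e e' : Bool) : F :=
  (if e = true ∧ e' = false then 1 - u ^ (a j - a (j + 1)) else 1) *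
    u ^ ((a j - b j - (if e then 1 else 0)) +
      Nat.choose (a j - b j - (if e then 1 else 0)) 2) *
    gauss u ((a j : ℤ) - (if e then 1 else 0) - (b (j + 1) : ℤ))
      ((b j : ℤ) - (b (j + 1) : ℤ))

/-- closed form for the partial sums. -/
noncomputable def Qr (u : F) (a b : ℕ → ℕ) (J lo : ℕ) : F :=
  u ^ (∑ k ∈ Finset.Icc lo J, Nat.choose (a k - b k) 2) *
    (∏ k ∈ Finset.Icc lo J,
      phiPoch u (a k - b (k + 1)) /
        (phiPoch u (a (k + 1) - b (k + 1)) * phiPoch u (b k - b (k + 1)))) /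
    phiPoch u (a lo - b lo)

/-- the sum over configurations of the columns `lo..J`, with the `lo` indicator fixed to `e`. -/
noncomputable def SS (u : F) (a b : ℕ → ℕ) (J lo : ℕ) (e : Bool) : F :=
  ∑ S ∈ (Finset.Icc (lo + 1) J).powerset,
    ∏ j ∈ Finset.Icc lo J,
      colW u a b j (if j = lo then e else decide (j ∈ S))
        (if j + 1 = lo then e else decide (j + 1 ∈ S))

lemma colW_false (u : F) (a b : ℕ → ℕ) (j : ℕ) (e' : Bool) :
    colW u a b j false e' =
      u ^ ((a j - b j) + Nat.choose (a j - b j) 2) *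
        gauss u ((a j : ℤ) - (b (j + 1) : ℤ)) ((b j : ℤ) - (b (j + 1) : ℤ)) := by
  simp [colW]

lemma colW_true_true (u : F) (a b : ℕ → ℕ) (j : ℕ) :
    colW u a b j true true =
      u ^ ((a j - b j - 1) + Nat.choose (a j - b j - 1) 2) *
        gauss u ((a j : ℤ) - 1 - (b (j + 1) : ℤ)) ((b j : ℤ) - (b (j + 1) : ℤ)) := by
  simp [colW]

lemma colW_true_false (u : F) (a b : ℕ → ℕ) (j : ℕ) :
    colW u a b j true false =
      (1 - u ^ (a j - a (j + 1))) *
        (u ^ ((a j - b j - 1) + Nat.choose (a j - b j - 1) 2) *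
          gauss u ((a j : ℤ) - 1 - (b (j + 1) : ℤ)) ((b j : ℤ) - (b (j + 1) : ℤ))) := by
  simp [colW, mul_assoc]

/-- The key one-column algebraic identity. -/
lemma key_step {u : F} (hu : ∀ i, 1 ≤ i → u ^ i ≠ 1) (a b : ℕ → ℕ) (j : ℕ)
    (h1 : a (j + 1) ≤ a j) (h2 : b j ≤ a j) (h3 : b (j + 1) ≤ b j)
    (h4 : b (j + 1) ≤ a (j + 1)) (e : Bool) (Q' : F) :
    colW u a b j e true * ((1 - u ^ (a (j + 1) - b (j + 1))) * Q') +
      colW u a b j e false * (u ^ (a (j + 1) - b (j + 1)) * Q') =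
    (if e then 1 - u ^ (a j - b j) else u ^ (a j - b j)) *
      (u ^ Nat.choose (a j - b j) 2 *
        (phiPoch u (a j - b (j + 1)) /
          (phiPoch u (a (j + 1) - b (j + 1)) * phiPoch u (b j - b (j + 1)))) *
        (phiPoch u (a (j + 1) - b (j + 1)) / phiPoch u (a j - b j)) * Q') := by
  have hne := phiPoch_ne_zero hu
  set A := a j with hA
  set A' := a (j + 1) with hA'
  set B := b j with hB
  set B' := b (j + 1) with hB'
  cases e with
  | false =>
      rw [colW_false, colW_false]
      rw [show ((A : ℤ) - B') = ((A - B' : ℕ) : ℤ) by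
            push_cast [Nat.cast_sub (show B' ≤ A by omega)]; ring,
        show ((B : ℤ) - B') = ((B - B' : ℕ) : ℤ) by push_cast [Nat.cast_sub h3]; ring]
      rw [gauss_nat u _ _ (by omega)]
      rw [show A - B' - (B - B') = A - B by omega]
      rw [if_neg (by simp), pow_add]
      have n1 := hne (B - B')
      have n2 := hne (A - B)
      have n3 := hne (A' - B')
      field_simp
      ring
  | true =>
      rcases Nat.eq_or_lt_of_le h2 with hd0 | hd
      · -- d = 0 : both gauss vanish / RHS prefactor vanishes
        have hg : gauss u ((A : ℤ) - 1 - B') ((B : ℤ) - B') = 0 := by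
          apply gauss_zero_of_lt
          omega
        rw [colW_true_true, colW_true_false, hg]
        rw [if_pos rfl, ← hd0]
        simp
      · -- d ≥ 1
        rw [colW_true_true, colW_true_false]
        rw [show ((A : ℤ) - 1 - B') = (((A - 1 - B' : ℕ)) : ℤ) by
              push_cast [Nat.cast_sub (show B' ≤ A - 1 by omega),
                Nat.cast_sub (show 1 ≤ A by omega)]
              ring,
          show ((B : ℤ) - B') = ((B - B' : ℕ) : ℤ) by push_cast [Nat.cast_sub h3]; ring]
        rw [gauss_nat u _ _ (by omega)]
        rw [show A - 1 - B' - (B - B') = (A - B - 1) by omega]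
        rw [if_pos rfl]
        have hexp : (A - B - 1) + Nat.choose (A - B - 1) 2 = Nat.choose (A - B) 2 := by
          rw [show A - B = (A - B - 1) + 1 by omega, Nat.choose_succ_succ]
          simp [Nat.choose_one_right]
        rw [hexp]
        have hpow : u ^ (A - A') * u ^ (A' - B') = u ^ (A - B') := by
          rw [← pow_add]; congr 1; omega
        have hfact1 : phiPoch u (A - B') =
            phiPoch u (A - 1 - B') * (1 - u ^ (A - A') * u ^ (A' - B')) := by
          rw [hpow, show A - B' = (A - 1 - B') + 1 by omega, phiPoch_succ,
            show A - 1 - B' + 1 = A - B' by omega]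
        have hfact2 : phiPoch u (A - B) = phiPoch u (A - B - 1) * (1 - u ^ (A - B)) := by
          rw [show A - B = (A - B - 1) + 1 by omega, phiPoch_succ,
            show A - B - 1 + 1 = A - B by omega]
        have hr : (1 : F) - u ^ (A - B) ≠ 0 := by
          intro h
          exact hu (A - B) (by omega) (by linear_combination -h)
        rw [hfact1, hfact2]
        have n1 := hne (B - B')
        have n2 := hne (A - B - 1)
        have n3 := hne (A' - B')
        field_simp
        ring

lemma Icc_insert_bot {lo J : ℕ} (h : lo ≤ J) :
    Finset.Icc lo J = insert lo (Finset.Icc (lo + 1) J) := by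
  rw [Finset.Icc_add_one_left_eq_Ioc, Finset.Ioc_insert_left h]

lemma prod_Icc_bot {M : Type*} [CommMonoid M] {lo J : ℕ} (h : lo ≤ J) (f : ℕ → M) :
    ∏ j ∈ Finset.Icc lo J, f j = f lo * ∏ j ∈ Finset.Icc (lo + 1) J, f j := by
  rw [Icc_insert_bot h, Finset.prod_insert (by simp)]

lemma Qr_rec {u : F} (hu : ∀ i, 1 ≤ i → u ^ i ≠ 1) (a b : ℕ → ℕ) (J lo : ℕ) (h : lo ≤ J) :
    Qr u a b J lo =
      u ^ Nat.choose (a lo - b lo) 2 *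
        (phiPoch u (a lo - b (lo + 1)) /
          (phiPoch u (a (lo + 1) - b (lo + 1)) * phiPoch u (b lo - b (lo + 1)))) *
        (phiPoch u (a (lo + 1) - b (lo + 1)) / phiPoch u (a lo - b lo)) *
        Qr u a b J (lo + 1) := by
  have hne := phiPoch_ne_zero hu
  have key : ∀ s : Finset ℕ,
      (∏ x ∈ s, phiPoch u (a (x + 1) - b (x + 1)) * phiPoch u (b x - b (x + 1))) ≠ 0 :=
    fun s => Finset.prod_ne_zero_iff.mpr (fun x _ => mul_ne_zero (hne _) (hne _))
  have key2 : ∀ s : Finset ℕ,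
      (∏ x ∈ s, phiPoch u (a x - b (x + 1)) /
        (phiPoch u (a (x + 1) - b (x + 1)) * phiPoch u (b x - b (x + 1)))) =
      (∏ x ∈ s, phiPoch u (a x - b (x + 1))) /
        (∏ x ∈ s, phiPoch u (a (x + 1) - b (x + 1)) * phiPoch u (b x - b (x + 1))) := by
    intro s
    rw [Finset.prod_div_distrib]
  unfold Qr
  rw [prod_Icc_bot h, Finset.sum_eq_sum_sdiff_singleton_add (Finset.mem_Icc.mpr ⟨le_rfl, h⟩)
      (fun k => Nat.choose (a k - b k) 2)]
  rw [show Finset.Icc lo J \ {lo} = Finset.Icc (lo + 1) J by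
        ext x; simp only [Finset.mem_sdiff, Finset.mem_Icc, Finset.mem_singleton]; omega]
  rw [pow_add, key2]
  have hP := key (Finset.Icc (lo + 1) J)
  have n1 := hne (a (lo + 1) - b (lo + 1))
  have n2 := hne (b lo - b (lo + 1))
  have n3 := hne (a lo - b lo)
  field_simp

lemma SS_base (u : F) (a b : ℕ → ℕ) (J : ℕ) (e : Bool) :
    SS u a b J J e = colW u a b J e false := by
  unfold SS
  rw [show Finset.Icc (J + 1) J = (∅ : Finset ℕ) by
    ext x; simp only [Finset.mem_Icc, Finset.notMem_empty, iff_false]; omega]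
  rw [Finset.powerset_empty, Finset.sum_singleton, Finset.Icc_self, Finset.prod_singleton]
  congr 1
  · simp
  · rw [if_neg (by omega)]
    simp

lemma SS_rec (u : F) (a b : ℕ → ℕ) (J lo : ℕ) (hlo : lo + 1 ≤ J) (e : Bool) :
    SS u a b J lo e =
      colW u a b lo e true * SS u a b J (lo + 1) true +
        colW u a b lo e false * SS u a b J (lo + 1) false := by
  unfold SS
  rw [show Finset.Icc (lo + 1) J = insert (lo + 1) (Finset.Icc (lo + 2) J) by
        rw [show lo + 2 = (lo + 1) + 1 by ring]; exact Icc_insert_bot hlo]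
  rw [Finset.sum_powerset_insert (by simp)]
  rw [Finset.mul_sum, Finset.mul_sum, add_comm]
  congr 1
  · -- terms with lo+1 ∈ S : next indicator true
    apply Finset.sum_congr rfl
    intro S hS
    have hSsub : S ⊆ Finset.Icc (lo + 2) J := Finset.mem_powerset.mp hS
    have h5 : ∀ k, lo + 2 ≤ k → (decide (k ∈ insert (lo + 1) S) = decide (k ∈ S)) := by
      intro k hk
      by_cases h : k ∈ S
      · rw [decide_eq_true h, decide_eq_true (Finset.mem_insert_of_mem h)]
      · rw [decide_eq_false h, decide_eq_false]
        intro hcon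
        rcases Finset.mem_insert.mp hcon with h' | h'
        · omega
        · exact h h'
    rw [prod_Icc_bot (show lo ≤ J by omega)]
    congr 1
    · rw [if_pos rfl, if_neg (by omega), decide_eq_true (Finset.mem_insert_self _ _)]
    · rw [show insert (lo + 1) (Finset.Icc (lo + 2) J) = Finset.Icc (lo + 1) J from by
            rw [show lo + 2 = lo + 1 + 1 by ring]; exact (Icc_insert_bot hlo).symm]
      apply Finset.prod_congr rfl
      intro j hj
      simp only [Finset.mem_Icc] at hj
      by_cases hj1 : j = lo + 1
      · subst hj1
        rw [if_neg (by omega), if_neg (by omega), if_pos rfl, if_neg (by omega),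
          decide_eq_true (Finset.mem_insert_self _ _), h5 (lo + 1 + 1) (by omega)]
      · rw [if_neg (by omega), if_neg (by omega), if_neg (by omega), if_neg (by omega),
          h5 j (by omega), h5 (j + 1) (by omega)]
  · -- terms with lo+1 ∉ S : next indicator false
    apply Finset.sum_congr rfl
    intro S hS
    have hSsub : S ⊆ Finset.Icc (lo + 2) J := Finset.mem_powerset.mp hS
    have hnotmem : lo + 1 ∉ S := fun h => by
      have := hSsub h; simp only [Finset.mem_Icc] at this; omega
    rw [prod_Icc_bot (show lo ≤ J by omega)]
    congr 1
    · rw [if_pos rfl, if_neg (by omega), decide_eq_false hnotmem]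
    · rw [show insert (lo + 1) (Finset.Icc (lo + 2) J) = Finset.Icc (lo + 1) J from by
            rw [show lo + 2 = lo + 1 + 1 by ring]; exact (Icc_insert_bot hlo).symm]
      apply Finset.prod_congr rfl
      intro j hj
      simp only [Finset.mem_Icc] at hj
      by_cases hj1 : j = lo + 1
      · subst hj1
        rw [if_neg (by omega), if_neg (by omega), if_pos rfl, if_neg (by omega),
          decide_eq_false hnotmem]
      · rw [if_neg (by omega), if_neg (by omega), if_neg (by omega), if_neg (by omega)]

/-- Main induction: closed form for the partial sums. -/
lemma SS_eq {u : F} (hu : ∀ i, 1 ≤ i → u ^ i ≠ 1) (a b : ℕ → ℕ) (J : ℕ)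
    (ha : ∀ j, 1 ≤ j → a (j + 1) ≤ a j) (hb : ∀ j, 1 ≤ j → b (j + 1) ≤ b j)
    (hba : ∀ j, 1 ≤ j → b j ≤ a j) (haJ : a (J + 1) = 0) :
    ∀ m lo, 1 ≤ lo → lo ≤ J → J - lo = m → ∀ e : Bool,
      SS u a b J lo e =
        (if e then 1 - u ^ (a lo - b lo) else u ^ (a lo - b lo)) * Qr u a b J lo := by
  have hbJ : b (J + 1) = 0 := by have := hba (J + 1) (by omega); omega
  intro m
  induction m with
  | zero =>
      intro lo hlo1 hloJ hm e
      have hJ : lo = J := by omega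
      subst hJ
      rw [SS_base]
      have h0 : (1 : F) - u ^ (a (lo + 1) - b (lo + 1)) = 0 := by
        rw [haJ, hbJ]; simp
      have h1 : u ^ (a (lo + 1) - b (lo + 1)) = 1 := by rw [haJ, hbJ]; simp
      have hks := key_step hu a b lo (by omega) (hba lo (by omega)) (by omega) (by omega) e
        (Qr u a b lo (lo + 1))
      rw [h0, h1] at hks
      simp only [zero_mul, mul_zero, zero_add, one_mul] at hks
      have hQ1 : Qr u a b lo (lo + 1) = 1 := by
        unfold Qr
        rw [show Finset.Icc (lo + 1) lo = (∅ : Finset ℕ) by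
          ext x; simp only [Finset.mem_Icc, Finset.notMem_empty, iff_false]; omega]
        rw [haJ, hbJ]
        simp [phiPoch_zero]
      rw [hQ1, mul_one] at hks
      rw [hks, Qr_rec hu a b lo lo le_rfl, hQ1]
  | succ m ih =>
      intro lo hlo1 hloJ hm e
      have hlt : lo + 1 ≤ J := by omega
      rw [SS_rec u a b J lo hlt e]
      rw [ih (lo + 1) (by omega) hlt (by omega) true,
        ih (lo + 1) (by omega) hlt (by omega) false]
      rw [if_pos rfl, if_neg (by simp)]
      have := key_step hu a b lo (ha lo hlo1) (hba lo hlo1) (hb lo hlo1)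
        (hba (lo + 1) (by omega)) e (Qr u a b J (lo + 1))
      rw [this, Qr_rec hu a b J lo hloJ]

end Aux

section PartA

variable {F : Type*} [Field F]

/-- column heights determined by a subset `S` (column 1 always decremented). -/
def cOf (a : ℕ → ℕ) (S : Finset ℕ) (j : ℕ) : ℕ := a j - (if j = 1 ∨ j ∈ S then 1 else 0)

/-- the candidate partition attached to a subset of columns. -/
noncomputable def betaOf (a : ℕ → ℕ) (S : Finset ℕ) : ℕ → ℕ := rows (cOf a S)

/-- validity of a subset: the column heights dominate `b` and are decreasing. -/
def VP (a b : ℕ → ℕ) (S : Finset ℕ) : Prop :=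
  ∀ j, 1 ≤ j → (b j ≤ cOf a S j ∧ cOf a S (j + 1) ≤ cOf a S j)

variable {n : ℕ} {f g : ℕ → ℕ}

lemma cOf_le (a : ℕ → ℕ) (S : Finset ℕ) (j : ℕ) : cOf a S j ≤ a j := Nat.sub_le _ _

lemma le_cOf_succ (a : ℕ → ℕ) (S : Finset ℕ) (j : ℕ) : a j ≤ cOf a S j + 1 := by
  unfold cOf; split <;> omega

section ctx

variable (hn : 1 ≤ n) (hf : IsPartition f) (hfl : HasLength f n)
  (hg : IsPartition g) (hgl : HasLength g (n - 1)) (hsub : ∀ i, g i ≤ f i)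

include hf in
lemma conj_f_zero {j : ℕ} (hj : f 0 < j) : conj f j = 0 := conj_eq_zero hf.1 hf.2 hj

include hf hfl hn in
lemma cOf_one (S : Finset ℕ) : cOf (conj f) S 1 = n - 1 := by
  unfold cOf
  rw [conj_one_of_hasLength hf.1 hf.2 hfl, if_pos (Or.inl rfl)]

include hf in
lemma cOf_anti {S : Finset ℕ} (hV : VP (conj f) (conj g) S) :
    Antitone (fun j => cOf (conj f) S (j + 1)) :=
  antitone_nat_of_succ_le (fun j => (hV (j + 1) (by omega)).2)

include hf in
lemma cOf_evz (S : Finset ℕ) : ∀ i, f 0 ≤ i → cOf (conj f) S (i + 1) = 0 := by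
  intro i hi
  unfold cOf
  rw [conj_f_zero hf (by omega)]
  omega

include hf in
lemma cOf_evz' (S : Finset ℕ) : ∃ N, ∀ i, N ≤ i → cOf (conj f) S (i + 1) = 0 :=
  ⟨f 0, cOf_evz hf S⟩

include hf in
/-- `conj (betaOf S) = cOf S` for valid `S`. -/
lemma conj_betaOf {S : Finset ℕ} (hV : VP (conj f) (conj g) S) {j : ℕ} (hj : 1 ≤ j) :
    conj (betaOf (conj f) S) j = cOf (conj f) S j :=
  conj_rows (cOf_anti hf hV) (cOf_evz' hf S) hj

include hf in
lemma betaOf_partition {S : Finset ℕ} (hV : VP (conj f) (conj g) S) :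
    IsPartition (betaOf (conj f) S) :=
  ⟨rows_anti (cOf_anti hf hV) (cOf_evz' hf S),
   rows_exists_zero (cOf_anti hf hV) (cOf_evz' hf S)⟩

include hf hg in
lemma g_le_betaOf {S : Finset ℕ} (hV : VP (conj f) (conj g) S) (i : ℕ) :
    g i ≤ betaOf (conj f) S i := by
  have h1 : rows (conj g) i = g i := rows_conj hg.1 hg.2 i
  rw [← h1]
  unfold rows
  exact conj_mono (cOf_anti hf hV) (cOf_evz' hf S)
    (conj_succ_anti hg.1 hg.2) (conj_succ_ev_zero hg.1 hg.2)
    (fun j => (hV (j + 1) (by omega)).1) (by omega)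

include hf in
lemma betaOf_le_f {S : Finset ℕ} (hV : VP (conj f) (conj g) S) (i : ℕ) :
    betaOf (conj f) S i ≤ f i := by
  have h1 : rows (conj f) i = f i := rows_conj hf.1 hf.2 i
  rw [← h1]
  unfold rows
  exact conj_mono (conj_succ_anti hf.1 hf.2) (conj_succ_ev_zero hf.1 hf.2)
    (cOf_anti hf hV) (cOf_evz' hf S)
    (fun j => cOf_le (conj f) S (j + 1)) (by omega)

include hf in
lemma betaOf_hstrip {S : Finset ℕ} (hV : VP (conj f) (conj g) S) :
    IsHStrip f (betaOf (conj f) S) := by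
  constructor
  · exact betaOf_le_f hf hV
  · intro j hj
    rw [conj_betaOf hf hV hj]
    exact le_cOf_succ (conj f) S j

include hn hf hfl in
lemma betaOf_len {S : Finset ℕ} (hV : VP (conj f) (conj g) S) :
    ∀ i, n - 1 ≤ i → betaOf (conj f) S i = 0 := by
  intro i hi
  apply rows_ev_zero (cOf_anti hf hV) (cOf_evz' hf S)
  rw [cOf_one hn hf hfl S]
  exact hi

/-- the subset recovered from a partition `β`. -/
noncomputable def Sof (f β : ℕ → ℕ) : Finset ℕ :=
  (Finset.Icc 2 (f 0)).filter (fun j => conj β j ≠ conj f j)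

section beta
variable {β : ℕ → ℕ} (hβ : IsPartition β) (hgβ : ∀ i, g i ≤ β i)
  (hstrip : IsHStrip f β) (hβlen : ∀ i, n - 1 ≤ i → β i = 0)

lemma mem_Sof {β : ℕ → ℕ} {j : ℕ} :
    j ∈ Sof f β ↔ (2 ≤ j ∧ j ≤ f 0 ∧ conj β j ≠ conj f j) := by
  simp [Sof, Finset.mem_filter, Finset.mem_Icc, and_assoc]

include hn hf hfl hg hgl hβ hgβ hstrip hβlen in
lemma cOf_Sof {j : ℕ} (hj : 1 ≤ j) : cOf (conj f) (Sof f β) j = conj β j := by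
  have hβf : ∀ k, 1 ≤ k → conj β k ≤ conj f k := fun k hk =>
    conj_mono hf.1 hf.2 hβ.1 hβ.2 hstrip.1 hk
  have hgb : ∀ k, 1 ≤ k → conj g k ≤ conj β k := fun k hk =>
    conj_mono hβ.1 hβ.2 hg.1 hg.2 hgβ hk
  show conj f j - (if j = 1 ∨ j ∈ Sof f β then 1 else 0) = conj β j
  by_cases hc : j = 1 ∨ j ∈ Sof f β
  · rw [if_pos hc]
    rcases hc with hc | hc
    · subst hc
      have ha1 : conj f 1 = n := conj_one_of_hasLength hf.1 hf.2 hfl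
      have hb1 : conj g 1 = n - 1 := conj_one_of_hasLength hg.1 hg.2 hgl
      have h2 : conj β 1 ≤ n - 1 := conj_le_len hβ.1 hβ.2 hβlen le_rfl
      have h3 : n - 1 ≤ conj β 1 := by rw [← hb1]; exact hgb 1 le_rfl
      omega
    · obtain ⟨hj2, hjf, hne⟩ := mem_Sof.mp hc
      have h1 : conj β j ≤ conj f j := hβf j hj
      have h2 : conj f j ≤ conj β j + 1 := hstrip.2 j hj
      omega
  · rw [if_neg hc]
    push_neg at hc
    have h1 : conj β j ≤ conj f j := hβf j hj
    by_cases hj0 : j ≤ f 0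
    · have h3 : ¬(2 ≤ j ∧ j ≤ f 0 ∧ conj β j ≠ conj f j) := fun h => hc.2 (mem_Sof.mpr h)
      have hj2 : 2 ≤ j := by omega
      by_contra hne
      exact h3 ⟨hj2, hj0, by omega⟩
    · have h2 : conj f j = 0 := conj_f_zero hf (by omega)
      omega

include hn hf hfl hg hgl hβ hgβ hstrip hβlen in
lemma VP_Sof : VP (conj f) (conj g) (Sof f β) := by
  intro j hj
  rw [cOf_Sof hn hf hfl hg hgl hβ hgβ hstrip hβlen hj,
    cOf_Sof hn hf hfl hg hgl hβ hgβ hstrip hβlen (by omega : 1 ≤ j + 1)]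
  exact ⟨conj_mono hβ.1 hβ.2 hg.1 hg.2 hgβ hj, conj_anti hβ.1 hβ.2 hj (by omega)⟩

include hn hf hfl hg hgl hβ hgβ hstrip hβlen in
lemma betaOf_Sof : betaOf (conj f) (Sof f β) = β := by
  funext i
  unfold betaOf rows
  rw [show (fun j => cOf (conj f) (Sof f β) (j + 1)) = (fun j => conj β (j + 1)) from
    funext (fun j => cOf_Sof hn hf hfl hg hgl hβ hgβ hstrip hβlen (by omega))]
  exact rows_conj hβ.1 hβ.2 i

end beta

include hn hf hfl in
lemma betaOf_inj {S S' : Finset ℕ}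
    (hS : S ⊆ Finset.Icc 2 (f 0)) (hS' : S' ⊆ Finset.Icc 2 (f 0))
    (hV : VP (conj f) (conj g) S) (hV' : VP (conj f) (conj g) S')
    (h : betaOf (conj f) S = betaOf (conj f) S') : S = S' := by
  have key : ∀ (T T' : Finset ℕ), T ⊆ Finset.Icc 2 (f 0) → T' ⊆ Finset.Icc 2 (f 0) →
      VP (conj f) (conj g) T → VP (conj f) (conj g) T' →
      betaOf (conj f) T = betaOf (conj f) T' → ∀ j ∈ T, j ∈ T' := by
    intro T T' hT hT' hVT hVT' hEq j hjT
    have hjI := hT hjT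
    simp only [Finset.mem_Icc] at hjI
    have haj : 1 ≤ conj f j :=
      conj_pos hf.1 hf.2 (by omega) (by omega)
    have h1 : cOf (conj f) T j = cOf (conj f) T' j := by
      rw [← conj_betaOf hf hVT (by omega : 1 ≤ j), ← conj_betaOf hf hVT' (by omega : 1 ≤ j), hEq]
    by_contra hjT'
    unfold cOf at h1
    rw [if_pos (Or.inr hjT), if_neg] at h1
    · omega
    · rintro (hc | hc)
      · omega
      · exact hjT' hc
  apply Finset.Subset.antisymm
  · intro j hj; exact key S S' hS hS' hV hV' h j hj
  · intro j hj; exact key S' S hS' hS hV' hV h.symm j hj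

lemma eps_spec (S : Finset ℕ) (k : ℕ) :
    ((if k = 1 then true else decide (k ∈ S)) = true ↔ (k = 1 ∨ k ∈ S)) := by
  by_cases h : k = 1 <;> simp [h]

lemma eps_spec' (S : Finset ℕ) (k : ℕ) :
    ((if k = 1 then true else decide (k ∈ S)) = false ↔ ¬(k = 1 ∨ k ∈ S)) := by
  rw [Bool.eq_false_iff, Ne, eps_spec]

lemma ind_spec (S : Finset ℕ) (k : ℕ) :
    ((if (if k = 1 then true else decide (k ∈ S)) then 1 else 0) : ℕ) =
      (if k = 1 ∨ k ∈ S then 1 else 0) := by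
  by_cases h : k = 1 <;> by_cases h2 : k ∈ S <;> simp [h, h2]

section ctx2

variable (hn : 1 ≤ n) (hf : IsPartition f) (hfl : HasLength f n)
  (hg : IsPartition g) (hgl : HasLength g (n - 1)) (hsub : ∀ i, g i ≤ f i)

include hn hf hfl hg hsub in
/-- the summand attached to a valid subset equals the product of column weights. -/
lemma term_eq (u : F) {S : Finset ℕ} (hS : S ⊆ Finset.Icc 2 (f 0))
    (hV : VP (conj f) (conj g) S) :
    phiStrip u f (betaOf (conj f) S) *
        u ^ (psize (betaOf (conj f) S) - psize g) * sk u (betaOf (conj f) S) g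
      = ∏ j ∈ Finset.Icc 1 (f 0),
          colW u (conj f) (conj g) j (if j = 1 then true else decide (j ∈ S))
            (if j + 1 = 1 then true else decide (j + 1 ∈ S)) := by
  have hf01 : 1 ≤ f 0 := by have := hfl.1 0 (by omega); omega
  set β := betaOf (conj f) S with hβdef
  have hβpart : IsPartition β := betaOf_partition hf hV
  have hgβ : ∀ i, g i ≤ β i := g_le_betaOf hf hg hV
  have hβf : ∀ i, β i ≤ f i := betaOf_le_f hf hV
  have hstr : IsHStrip f β := betaOf_hstrip hf hV
  have hcβ : ∀ j, 1 ≤ j → conj β j = cOf (conj f) S j := fun j hj => conj_betaOf hf hV hj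
  have hβ0 : β 0 ≤ f 0 := hβf 0
  have hg0 : g 0 ≤ f 0 := hsub 0
  have hgβc : ∀ j, 1 ≤ j → conj g j ≤ conj β j := fun j hj =>
    conj_mono hβpart.1 hβpart.2 hg.1 hg.2 hgβ hj
  have hmemS : ∀ k, k ∈ S → 2 ≤ k ∧ k ≤ f 0 := by
    intro k hk; have := hS hk; simpa [Finset.mem_Icc] using this
  -- ε as local abbreviations
  set ε : ℕ → Bool := fun k => if k = 1 then true else decide (k ∈ S) with hεdef
  have hεor : ∀ k, ε k = true ↔ (k = 1 ∨ k ∈ S) := fun k => eps_spec S k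
  have hεor' : ∀ k, ε k = false ↔ ¬(k = 1 ∨ k ∈ S) := fun k => eps_spec' S k
  have hind : ∀ k, ((if ε k then 1 else 0) : ℕ) = (if k = 1 ∨ k ∈ S then 1 else 0) :=
    fun k => ind_spec S k
  -- the strip condition matches the indicator condition
  have hstripiff : ∀ j, 1 ≤ j → j ≤ f 0 →
      ((conj f j = conj β j + 1 ∧ conj f (j + 1) = conj β (j + 1)) ↔
        (ε j = true ∧ ε (j + 1) = false)) := by
    intro j hj1 hjf
    rw [hcβ j hj1, hcβ (j + 1) (by omega), hεor j, hεor' (j + 1)]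
    have haj1 : 1 ≤ conj f j := conj_pos hf.1 hf.2 hj1 hjf
    unfold cOf
    by_cases m1 : j = 1 ∨ j ∈ S <;> by_cases m2 : j + 1 = 1 ∨ j + 1 ∈ S
    · have hsucc : 1 ≤ conj f (j + 1) := by
        rcases m2 with h | h
        · omega
        · exact conj_pos hf.1 hf.2 (by omega) (hmemS _ h).2
      rw [if_pos m1, if_pos m2]
      constructor
      · rintro ⟨h1, h2⟩
        exfalso
        omega
      · rintro ⟨_, h2⟩
        exact absurd m2 h2
    · rw [if_pos m1, if_neg m2]
      constructor
      · rintro ⟨h1, h2⟩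
        exact ⟨m1, m2⟩
      · rintro ⟨_, _⟩
        constructor <;> omega
    · rw [if_neg m1, if_pos m2]
      constructor
      · rintro ⟨h1, h2⟩
        exfalso
        omega
      · rintro ⟨h1, _⟩
        exact absurd h1 m1
    · rw [if_neg m1, if_neg m2]
      constructor
      · rintro ⟨h1, h2⟩
        exfalso
        omega
      · rintro ⟨h1, _⟩
        exact absurd h1 m1
  -- phiStrip
  have hphi : phiStrip u f β = ∏ j ∈ Finset.Icc 1 (f 0),
      (if (conj f j = conj β j + 1 ∧ conj f (j + 1) = conj β (j + 1)) then
        (1 - u ^ (conj f j - conj f (j + 1))) else 1) := by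
    unfold phiStrip
    rw [if_pos hstr, Finset.prod_filter]
  -- psize difference
  have hpsd : psize β - psize g = ∑ j ∈ Finset.Icc 1 (f 0), (conj β j - conj g j) := by
    rw [psize_eq_sum_conj hβpart.1 hβpart.2 hβ0, psize_eq_sum_conj hg.1 hg.2 hg0]
    rw [show (∑ j ∈ Finset.Icc 1 (f 0), conj β j) =
        (∑ j ∈ Finset.Icc 1 (f 0), ((conj β j - conj g j) + conj g j)) from
      Finset.sum_congr rfl (fun j hj => by
        have := hgβc j (Finset.mem_Icc.mp hj).1; omega)]
    rw [Finset.sum_add_distrib]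
    omega
  -- sk with extended range
  have hsk : sk u β g = u ^ (∑ j ∈ Finset.Icc 1 (f 0), Nat.choose (conj β j - conj g j) 2) *
      ∏ j ∈ Finset.Icc 1 (f 0),
        gauss u ((conj β j : ℤ) - (conj g (j + 1) : ℤ)) ((conj g j : ℤ) - (conj g (j + 1) : ℤ)) := by
    have hsubset : Finset.Icc 1 (β 0) ⊆ Finset.Icc 1 (f 0) := by
      apply Finset.Icc_subset_Icc le_rfl hβ0
    have hzero : ∀ x ∈ Finset.Icc 1 (f 0), x ∉ Finset.Icc 1 (β 0) →
        conj β x = 0 ∧ conj g x = 0 ∧ conj g (x + 1) = 0 := by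
      intro x hx hnx
      simp only [Finset.mem_Icc] at hx hnx
      have hx0 : β 0 < x := by omega
      have h1 : conj β x = 0 := conj_eq_zero hβpart.1 hβpart.2 hx0
      have h2 : conj g x = 0 := by have := hgβc x (by omega); omega
      have h3 : conj g (x + 1) = 0 := by
        have := conj_anti hg.1 hg.2 (show 1 ≤ x by omega) (show x ≤ x + 1 by omega)
        omega
      exact ⟨h1, h2, h3⟩
    unfold sk
    congr 1
    · congr 1
      apply Finset.sum_subset hsubset
      intro x hx hnx
      obtain ⟨h1, h2, h3⟩ := hzero x hx hnx
      rw [h1, h2]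
      simp
    · apply Finset.prod_subset hsubset
      intro x hx hnx
      obtain ⟨h1, h2, h3⟩ := hzero x hx hnx
      rw [h1, h2, h3]
      norm_num [gauss, phiPoch_zero]
  -- the per-column identity
  have key : ∀ j ∈ Finset.Icc 1 (f 0),
      colW u (conj f) (conj g) j (ε j) (ε (j + 1)) =
        (if (conj f j = conj β j + 1 ∧ conj f (j + 1) = conj β (j + 1)) then
          (1 - u ^ (conj f j - conj f (j + 1))) else 1) *
        (u ^ ((conj β j - conj g j) + Nat.choose (conj β j - conj g j) 2) *
          gauss u ((conj β j : ℤ) - (conj g (j + 1) : ℤ))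
            ((conj g j : ℤ) - (conj g (j + 1) : ℤ))) := by
    intro j hj
    simp only [Finset.mem_Icc] at hj
    have haj1 : 1 ≤ conj f j := conj_pos hf.1 hf.2 hj.1 hj.2
    have hcj : conj β j = conj f j - (if ε j then 1 else 0) := by
      rw [hcβ j hj.1, hind j]; rfl
    have hindle : (if ε j then 1 else 0) ≤ conj f j := by
      split <;> omega
    unfold colW
    rw [← mul_assoc]
    congr 1
    · congr 1
      · -- strip factor
        rcases hstripiff j hj.1 hj.2 with hiff
        by_cases hcond : ε j = true ∧ ε (j + 1) = false
        · rw [if_pos hcond, if_pos (hiff.mpr hcond)]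
        · rw [if_neg hcond, if_neg (fun h => hcond (hiff.mp h))]
      · -- power
        congr 1
        have : conj f j - conj g j - (if ε j then 1 else 0) = conj β j - conj g j := by
          rw [hcj]
          omega
        rw [this]
    · -- gauss factor
      congr 1
      rw [hcj]
      have hcast : ((conj f j - (if ε j then 1 else 0) : ℕ) : ℤ) =
          (conj f j : ℤ) - (if ε j then (1 : ℤ) else 0) := by
        rcases Bool.dichotomy (ε j) with h | h <;> rw [h]
        · simp
        · simp only [if_true]
          rw [Nat.cast_sub haj1]
          norm_num
      rw [hcast]
  -- assemble
  calc phiStrip u f β * u ^ (psize β - psize g) * sk u β g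
      = (∏ j ∈ Finset.Icc 1 (f 0),
          (if (conj f j = conj β j + 1 ∧ conj f (j + 1) = conj β (j + 1)) then
            (1 - u ^ (conj f j - conj f (j + 1))) else 1)) *
        (∏ j ∈ Finset.Icc 1 (f 0),
          (u ^ ((conj β j - conj g j) + Nat.choose (conj β j - conj g j) 2) *
            gauss u ((conj β j : ℤ) - (conj g (j + 1) : ℤ))
              ((conj g j : ℤ) - (conj g (j + 1) : ℤ)))) := by
        rw [hphi, hpsd, hsk]
        rw [Finset.prod_mul_distrib]
        rw [show (∏ j ∈ Finset.Icc 1 (f 0),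
            u ^ ((conj β j - conj g j) + Nat.choose (conj β j - conj g j) 2)) =
          u ^ (∑ j ∈ Finset.Icc 1 (f 0),
            ((conj β j - conj g j) + Nat.choose (conj β j - conj g j) 2)) from
          Finset.prod_pow_eq_pow_sum _ _ _]
        rw [Finset.sum_add_distrib, pow_add]
        ring
    _ = ∏ j ∈ Finset.Icc 1 (f 0), colW u (conj f) (conj g) j (ε j) (ε (j + 1)) := by
        rw [← Finset.prod_mul_distrib]
        exact (Finset.prod_congr rfl key).symm
    _ = _ := by
        simp only [hεdef]

include hn hf hfl hg hsub in
/-- the product of column weights vanishes for invalid subsets. -/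
lemma term_zero (u : F) {S : Finset ℕ} (hS : S ⊆ Finset.Icc 2 (f 0))
    (hV : ¬ VP (conj f) (conj g) S) :
    (∏ j ∈ Finset.Icc 1 (f 0),
      colW u (conj f) (conj g) j (if j = 1 then true else decide (j ∈ S))
        (if j + 1 = 1 then true else decide (j + 1 ∈ S))) = 0 := by
  have hf01 : 1 ≤ f 0 := by have := hfl.1 0 (by omega); omega
  have hmemS : ∀ k, k ∈ S → 2 ≤ k ∧ k ≤ f 0 := by
    intro k hk; have := hS hk; simpa [Finset.mem_Icc] using this
  have hba : ∀ k, 1 ≤ k → conj g k ≤ conj f k := fun k hk =>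
    conj_mono hf.1 hf.2 hg.1 hg.2 hsub hk
  unfold VP at hV
  push_neg at hV
  obtain ⟨j, hj, hviol⟩ := hV
  have hindle : ∀ k, ((if k = 1 ∨ k ∈ S then 1 else 0) : ℕ) ≤ 1 := by
    intro k; split <;> omega
  have hc_eq : ∀ k, cOf (conj f) S k = conj f k - (if k = 1 ∨ k ∈ S then 1 else 0) := fun k => rfl
  rcases Nat.lt_or_ge (cOf (conj f) S j) (conj g j) with hcase | hge
  · -- conj g j > cOf j ; forces the indicator to be 1 and b j = a j
    have hE1 : j = 1 ∨ j ∈ S := by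
      by_contra hE
      rw [hc_eq j, if_neg hE] at hcase
      have := hba j hj
      omega
    have hjf : j ≤ f 0 := by
      by_contra hjf
      have h0 : conj f j = 0 := conj_f_zero hf (by omega)
      have := hba j hj
      rw [hc_eq j] at hcase
      omega
    apply Finset.prod_eq_zero (Finset.mem_Icc.mpr ⟨hj, hjf⟩)
    have hεt : (if j = 1 then true else decide (j ∈ S)) = true := (eps_spec S j).mpr hE1
    rw [hεt]
    unfold colW
    rw [show gauss u ((conj f j : ℤ) - (if true then 1 else 0) - (conj g (j + 1) : ℤ))
        ((conj g j : ℤ) - (conj g (j + 1) : ℤ)) = 0 from ?_, mul_zero]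
    apply gauss_zero_of_lt
    have h1 : conj g j ≤ conj f j := hba j hj
    rw [hc_eq j, if_pos hE1] at hcase
    simp only [if_true]
    omega
  · -- cOf (j+1) > cOf j : forces ε j = 1, ε (j+1) = 0 and a j = a (j+1)
    have hcase := hviol hge
    have haa : conj f (j + 1) ≤ conj f j := conj_anti hf.1 hf.2 hj (by omega)
    have hjf : j ≤ f 0 := by
      by_contra hjf
      have h0 : conj f (j + 1) = 0 := conj_f_zero hf (by omega)
      have h1 : cOf (conj f) S (j + 1) = 0 := by rw [hc_eq (j + 1)]; omega
      omega
    have hE1 : j = 1 ∨ j ∈ S := by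
      by_contra hE
      rw [hc_eq j, if_neg hE, hc_eq (j + 1)] at hcase
      have := hindle (j + 1)
      omega
    have haj1 : 1 ≤ conj f j := conj_pos hf.1 hf.2 hj hjf
    have hE2 : ¬(j + 1 = 1 ∨ j + 1 ∈ S) := by
      rintro hE
      rw [hc_eq j, if_pos hE1, hc_eq (j + 1), if_pos hE] at hcase
      omega
    have haeq : conj f j = conj f (j + 1) := by
      rw [hc_eq j, if_pos hE1, hc_eq (j + 1), if_neg hE2] at hcase
      omega
    apply Finset.prod_eq_zero (Finset.mem_Icc.mpr ⟨hj, hjf⟩)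
    have hεt : (if j = 1 then true else decide (j ∈ S)) = true := (eps_spec S j).mpr hE1
    have hεf : (if j + 1 = 1 then true else decide (j + 1 ∈ S)) = false := by
      rw [if_neg (by omega : ¬ j + 1 = 1), decide_eq_false (fun h => hE2 (Or.inr h))]
    rw [hεt, hεf]
    unfold colW
    rw [if_pos ⟨rfl, rfl⟩]
    rw [show conj f j - conj f (j + 1) = 0 by omega]
    simp

end ctx2

end ctx

end PartA

/-- For partitions `λ` of length `n ≥ 1` and `μ ⊆ λ` of length `n-1`, in `ℚ(t)`:
`(b_μ(t²)/b_λ(t²)) Σ_β φ_{λ/β}(t²) t^{2(|β|-|μ|)} sk_{β/μ}(t²)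
   = t^{2 Σ_j C(λ'_j - μ'_j, 2)} ∏_{j≥1} binom(λ'_j - μ'_{j+1}, λ'_j - λ'_{j+1})_{t²}`,
the sum being over all partitions `β` with `μ ⊆ β`, `λ/β` a horizontal strip and
`l(β) ≤ n-1`.  The left side is the `q → 0` limit of the Gelfand–Tsetlin branching
coefficient `c_{λ,μ}(q,t)`; the right side is its closed product form. -/
theorem stmt5 (n : ℕ) (hn : 1 ≤ n) (f g : ℕ → ℕ)
    (hf : IsPartition f) (hfl : HasLength f n)
    (hg : IsPartition g) (hgl : HasLength g (n - 1))
    (hsub : ∀ i, g i ≤ f i) :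
    bcoef ((RatFunc.X : RatFunc ℚ) ^ 2) g / bcoef ((RatFunc.X : RatFunc ℚ) ^ 2) f *
        (∑ᶠ (β : ℕ → ℕ)
          (_ : IsPartition β ∧ (∀ i, g i ≤ β i) ∧ IsHStrip f β ∧ (∀ i, n - 1 ≤ i → β i = 0)),
          phiStrip ((RatFunc.X : RatFunc ℚ) ^ 2) f β *
            ((RatFunc.X : RatFunc ℚ) ^ 2) ^ (psize β - psize g) *
            sk ((RatFunc.X : RatFunc ℚ) ^ 2) β g)
      = ((RatFunc.X : RatFunc ℚ) ^ 2) ^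
            (∑ j ∈ Finset.Icc 1 (f 0), Nat.choose (conj f j - conj g j) 2) *
          ∏ j ∈ Finset.Icc 1 (f 0),
            gauss ((RatFunc.X : RatFunc ℚ) ^ 2)
              ((conj f j : ℤ) - (conj g (j + 1) : ℤ))
              ((conj f j : ℤ) - (conj f (j + 1) : ℤ)) := by
  classical
  set u : RatFunc ℚ := (RatFunc.X : RatFunc ℚ) ^ 2 with hudef
  have hu : ∀ i, 1 ≤ i → u ^ i ≠ 1 := by
    intro i hi
    rw [hudef, ← pow_mul, ← RatFunc.algebraMap_X, ← map_pow,
      ← map_one (algebraMap (Polynomial ℚ) (RatFunc ℚ))]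
    intro h
    have h2 := congrArg Polynomial.natDegree (RatFunc.algebraMap_injective ℚ h)
    simp [Polynomial.natDegree_X_pow] at h2
    omega
  have hne := phiPoch_ne_zero hu
  have hf01 : 1 ≤ f 0 := by have := hfl.1 0 (by omega); omega
  have ha1 : conj f 1 = n := conj_one_of_hasLength hf.1 hf.2 hfl
  have hb1 : conj g 1 = n - 1 := conj_one_of_hasLength hg.1 hg.2 hgl
  have hba : ∀ k, 1 ≤ k → conj g k ≤ conj f k := fun k hk =>
    conj_mono hf.1 hf.2 hg.1 hg.2 hsub hk
  have haanti : ∀ k, 1 ≤ k → conj f (k + 1) ≤ conj f k := fun k hk =>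
    conj_anti hf.1 hf.2 hk (by omega)
  have hbanti : ∀ k, 1 ≤ k → conj g (k + 1) ≤ conj g k := fun k hk =>
    conj_anti hg.1 hg.2 hk (by omega)
  have haJ : conj f (f 0 + 1) = 0 := conj_f_zero hf (by omega)
  have hg0 : g 0 ≤ f 0 := hsub 0
  -- Step 1 : the finsum equals the transfer-matrix sum
  have hsum : (∑ᶠ (β : ℕ → ℕ)
      (_ : IsPartition β ∧ (∀ i, g i ≤ β i) ∧ IsHStrip f β ∧ (∀ i, n - 1 ≤ i → β i = 0)),
        phiStrip u f β * u ^ (psize β - psize g) * sk u β g)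
      = SS u (conj f) (conj g) (f 0) 1 true := by
    set P : (ℕ → ℕ) → Prop := fun β =>
      IsPartition β ∧ (∀ i, g i ≤ β i) ∧ IsHStrip f β ∧ (∀ i, n - 1 ≤ i → β i = 0) with hPdef
    set T : (ℕ → ℕ) → RatFunc ℚ := fun β =>
      phiStrip u f β * u ^ (psize β - psize g) * sk u β g with hTdef
    set Fil : Finset (Finset ℕ) :=
      (Finset.Icc 2 (f 0)).powerset.filter (VP (conj f) (conj g)) with hFdef
    have hFilmem : ∀ S ∈ Fil, S ⊆ Finset.Icc 2 (f 0) ∧ VP (conj f) (conj g) S := by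
      intro S hS
      rw [hFdef, Finset.mem_filter, Finset.mem_powerset] at hS
      exact hS
    have e1 : ∀ β : ℕ → ℕ, (∑ᶠ (_ : P β), T β) = if P β then T β else 0 :=
      fun β => finsum_eq_if
    calc (∑ᶠ (β : ℕ → ℕ) (_ : P β), T β)
        = ∑ᶠ (β : ℕ → ℕ), if P β then T β else 0 := finsum_congr e1
      _ = ∑ β ∈ Fil.image (betaOf (conj f)), if P β then T β else 0 := by
          apply finsum_eq_finset_sum_of_support_subset
          intro β hβ
          have hPβ : P β := by
            by_contra hP
            simp only [Function.mem_support, if_neg hP] at hβ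
            exact hβ rfl
          obtain ⟨hβpart, hgβ, hstrip, hβlen⟩ := hPβ
          simp only [Finset.coe_image, Set.mem_image, Finset.mem_coe]
          refine ⟨Sof f β, ?_, betaOf_Sof hn hf hfl hg hgl hβpart hgβ hstrip hβlen⟩
          rw [hFdef, Finset.mem_filter, Finset.mem_powerset]
          exact ⟨Finset.filter_subset _ _,
            VP_Sof hn hf hfl hg hgl hβpart hgβ hstrip hβlen⟩
      _ = ∑ S ∈ Fil, (if P (betaOf (conj f) S) then T (betaOf (conj f) S) else 0) := by
          apply Finset.sum_image
          intro S hS S' hS' hEq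
          exact betaOf_inj hn hf hfl (hFilmem S hS).1 (hFilmem S' hS').1
            (hFilmem S hS).2 (hFilmem S' hS').2 hEq
      _ = ∑ S ∈ Fil, ∏ k ∈ Finset.Icc 1 (f 0),
            colW u (conj f) (conj g) k (if k = 1 then true else decide (k ∈ S))
              (if k + 1 = 1 then true else decide (k + 1 ∈ S)) := by
          apply Finset.sum_congr rfl
          intro S hS
          obtain ⟨hSsub, hVS⟩ := hFilmem S hS
          rw [if_pos ⟨betaOf_partition hf hVS, g_le_betaOf hf hg hVS,
            betaOf_hstrip hf hVS, betaOf_len hn hf hfl hVS⟩]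
          exact term_eq hn hf hfl hg hsub u hSsub hVS
      _ = ∑ S ∈ (Finset.Icc 2 (f 0)).powerset, ∏ k ∈ Finset.Icc 1 (f 0),
            colW u (conj f) (conj g) k (if k = 1 then true else decide (k ∈ S))
              (if k + 1 = 1 then true else decide (k + 1 ∈ S)) := by
          apply Finset.sum_subset (Finset.filter_subset _ _)
          intro S hS hnS
          have hVS : ¬ VP (conj f) (conj g) S := by
            intro hV
            exact hnS (Finset.mem_filter.mpr ⟨hS, hV⟩)
          exact term_zero hn hf hfl hg hsub u (Finset.mem_powerset.mp hS) hVS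
      _ = SS u (conj f) (conj g) (f 0) 1 true := by
          unfold SS
          norm_num
  rw [hsum]
  -- Step 2 : evaluate the transfer-matrix sum
  have hSS := SS_eq hu (conj f) (conj g) (f 0) haanti hbanti hba haJ
    (f 0 - 1) 1 le_rfl hf01 (by omega) true
  rw [if_pos rfl] at hSS
  rw [hSS]
  -- Step 3 : final algebra
  have hab1 : conj f 1 - conj g 1 = 1 := by omega
  have hphi1 : phiPoch u 1 = 1 - u ^ 1 := by
    unfold phiPoch
    rw [Finset.Icc_self, Finset.prod_singleton]
  have h1u : (1 : RatFunc ℚ) - u ^ 1 ≠ 0 := by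
    rw [← hphi1]; exact hne 1
  have hbg : bcoef u g = ∏ k ∈ Finset.Icc 1 (f 0), phiPoch u (conj g k - conj g (k + 1)) := by
    unfold bcoef
    apply Finset.prod_subset (Finset.Icc_subset_Icc le_rfl hg0)
    intro x hx hnx
    simp only [Finset.mem_Icc] at hx hnx
    have h1 : conj g x = 0 := conj_eq_zero hg.1 hg.2 (by omega)
    have h2 : conj g (x + 1) = 0 := by
      have := hbanti x (by omega); omega
    rw [h1, h2]
    exact phiPoch_zero u
  have hgauss : ∀ k ∈ Finset.Icc 1 (f 0),
      gauss u ((conj f k : ℤ) - (conj g (k + 1) : ℤ)) ((conj f k : ℤ) - (conj f (k + 1) : ℤ))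
        = phiPoch u (conj f k - conj g (k + 1)) /
            (phiPoch u (conj f k - conj f (k + 1)) *
              phiPoch u (conj f (k + 1) - conj g (k + 1))) := by
    intro k hk
    simp only [Finset.mem_Icc] at hk
    have h1 : conj g (k + 1) ≤ conj f (k + 1) := hba (k + 1) (by omega)
    have h2 : conj f (k + 1) ≤ conj f k := haanti k hk.1
    rw [show ((conj f k : ℤ) - conj g (k + 1)) = ((conj f k - conj g (k + 1) : ℕ) : ℤ) by
          push_cast [Nat.cast_sub (by omega : conj g (k + 1) ≤ conj f k)]; ring,
      show ((conj f k : ℤ) - conj f (k + 1)) = ((conj f k - conj f (k + 1) : ℕ) : ℤ) by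
          push_cast [Nat.cast_sub h2]; ring]
    rw [gauss_nat u _ _ (by omega)]
    rw [show conj f k - conj g (k + 1) - (conj f k - conj f (k + 1))
        = conj f (k + 1) - conj g (k + 1) by omega]
  rw [Finset.prod_congr rfl hgauss, hbg]
  unfold Qr bcoef
  rw [show conj f 1 - conj g 1 = 1 from hab1, hphi1]
  -- now pure field algebra with three products
  rw [show (∏ k ∈ Finset.Icc 1 (f 0), phiPoch u (conj f k - conj g (k + 1)) /
        (phiPoch u (conj f (k + 1) - conj g (k + 1)) * phiPoch u (conj g k - conj g (k + 1))))
      = (∏ k ∈ Finset.Icc 1 (f 0), phiPoch u (conj f k - conj g (k + 1))) /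
          ((∏ k ∈ Finset.Icc 1 (f 0), phiPoch u (conj f (k + 1) - conj g (k + 1))) *
            (∏ k ∈ Finset.Icc 1 (f 0), phiPoch u (conj g k - conj g (k + 1)))) from by
        rw [Finset.prod_div_distrib, Finset.prod_mul_distrib]]
  rw [show (∏ k ∈ Finset.Icc 1 (f 0), phiPoch u (conj f k - conj g (k + 1)) /
        (phiPoch u (conj f k - conj f (k + 1)) * phiPoch u (conj f (k + 1) - conj g (k + 1))))
      = (∏ k ∈ Finset.Icc 1 (f 0), phiPoch u (conj f k - conj g (k + 1))) /
          ((∏ k ∈ Finset.Icc 1 (f 0), phiPoch u (conj f k - conj f (k + 1))) *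
            (∏ k ∈ Finset.Icc 1 (f 0), phiPoch u (conj f (k + 1) - conj g (k + 1)))) from by
        rw [Finset.prod_div_distrib, Finset.prod_mul_distrib]]
  have hPa : (∏ k ∈ Finset.Icc 1 (f 0), phiPoch u (conj f k - conj f (k + 1))) ≠ 0 :=
    Finset.prod_ne_zero_iff.mpr (fun i _ => hne _)
  have hPb : (∏ k ∈ Finset.Icc 1 (f 0), phiPoch u (conj g k - conj g (k + 1))) ≠ 0 :=
    Finset.prod_ne_zero_iff.mpr (fun i _ => hne _)
  have hPd : (∏ k ∈ Finset.Icc 1 (f 0), phiPoch u (conj f (k + 1) - conj g (k + 1))) ≠ 0 :=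
    Finset.prod_ne_zero_iff.mpr (fun i _ => hne _)
  field_simp
  rw [div_eq_iff (by simpa using h1u)]
  ring

end EK
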